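/- (Key Lemma) For every σ ∈ S_{2k}, there exist τ, τ_1 ∈ K and g, g_1 ∈ S_k such that σ·τ·ḡ·σ^{-1} = τ_1·ḡ_1 and sgn(τ_1)·sgn(g)·sgn(g_1) = −1. -/

import Mathlib

/-- The equivalence `Fin k × Fin 2 ≃ Fin (2*k)` sending (zero-based) `(s, r)` to `2*s + r`. -/
def pairEquiv (k : ℕ) : Fin k × Fin 2 ≃ Fin (2 * k) :=
  finProdFinEquiv.trans (finCongr (Nat.mul_comm k 2))

/-- For `g ∈ S_k`, the permutation `ḡ ∈ S_{2k}` with `ḡ(2s−1) = 2g(s)−1` and `ḡ(2s) = 2g(s)`. -/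
def barPerm {k : ℕ} (g : Equiv.Perm (Fin k)) : Equiv.Perm (Fin (2 * k)) :=
  (pairEquiv k).permCongr (Equiv.prodCongr g (Equiv.refl (Fin 2)))

/-- `K ≤ S_{2k}`: the subgroup generated by the transpositions `(2s−1, 2s)`, `s = 1,…,k`. -/
def Ksub (k : ℕ) : Subgroup (Equiv.Perm (Fin (2 * k))) :=
  Subgroup.closure
    { τ | ∃ s : Fin k, τ = Equiv.swap (pairEquiv k (s, 0)) (pairEquiv k (s, 1)) }

/-- `H ≤ S_{2k}`: the subgroup generated by the transpositions `(2s−1, 2s)` together with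
all `ḡ` for `g ∈ S_k`. -/
def Hsub (k : ℕ) : Subgroup (Equiv.Perm (Fin (2 * k))) :=
  Subgroup.closure
    ({ τ | ∃ s : Fin k, τ = Equiv.swap (pairEquiv k (s, 0)) (pairEquiv k (s, 1)) } ∪
      { τ | ∃ g : Equiv.Perm (Fin k), τ = barPerm g })

namespace KL
open Equiv Equiv.Perm

variable {k : ℕ}

lemma perm_inv_apply_self {α : Type*} (e : Perm α) (x : α) : e⁻¹ (e x) = x :=
  Equiv.symm_apply_apply e x

lemma perm_apply_inv_self {α : Type*} (e : Perm α) (x : α) : e (e⁻¹ x) = x :=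
  Equiv.apply_symm_apply e x

/-- The fixed-point-free involution swapping each block. -/
def uu (k : ℕ) : Perm (Fin (2 * k)) :=
  (pairEquiv k).permCongr (Equiv.prodCongr (Equiv.refl (Fin k)) (Equiv.swap (0 : Fin 2) 1))

/-- block index of a point -/
def blk (x : Fin (2 * k)) : Fin k := ((pairEquiv k).symm x).1

lemma pe_symm_apply (s : Fin k) (r : Fin 2) : (pairEquiv k).symm (pairEquiv k (s, r)) = (s, r) :=
  Equiv.symm_apply_apply _ _

lemma ex_pe (x : Fin (2 * k)) : ∃ s r, pairEquiv k (s, r) = x :=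
  ⟨((pairEquiv k).symm x).1, ((pairEquiv k).symm x).2, by simp⟩

lemma fin2cases (r : Fin 2) : r = 0 ∨ r = 1 := by omega

lemma uu_apply (s : Fin k) (r : Fin 2) :
    uu k (pairEquiv k (s, r)) = pairEquiv k (s, Equiv.swap (0 : Fin 2) 1 r) := by
  simp [uu, Equiv.permCongr_apply, pe_symm_apply]

lemma uu_e0 (s : Fin k) : uu k (pairEquiv k (s, 0)) = pairEquiv k (s, 1) := by
  rw [uu_apply, Equiv.swap_apply_left]

lemma uu_e1 (s : Fin k) : uu k (pairEquiv k (s, 1)) = pairEquiv k (s, 0) := by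
  rw [uu_apply, Equiv.swap_apply_right]

lemma uu_uu (x : Fin (2 * k)) : uu k (uu k x) = x := by
  obtain ⟨s, r, rfl⟩ := ex_pe x
  rcases fin2cases r with rfl | rfl
  · rw [uu_e0, uu_e1]
  · rw [uu_e1, uu_e0]

lemma uu_ne (x : Fin (2 * k)) : uu k x ≠ x := by
  obtain ⟨s, r, rfl⟩ := ex_pe x
  rcases fin2cases r with rfl | rfl
  · rw [uu_e0]; intro h; simpa using (pairEquiv k).injective h
  · rw [uu_e1]; intro h; simpa using (pairEquiv k).injective h

lemma blk_pe (s : Fin k) (r : Fin 2) : blk (pairEquiv k (s, r)) = s := by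
  simp [blk, pe_symm_apply]

lemma blk_uu (x : Fin (2 * k)) : blk (uu k x) = blk x := by
  obtain ⟨s, r, rfl⟩ := ex_pe x
  rcases fin2cases r with rfl | rfl
  · rw [uu_e0, blk_pe, blk_pe]
  · rw [uu_e1, blk_pe, blk_pe]

lemma blk_cases (x : Fin (2 * k)) :
    x = pairEquiv k (blk x, 0) ∨ x = pairEquiv k (blk x, 1) := by
  obtain ⟨s, r, rfl⟩ := ex_pe x
  rcases fin2cases r with rfl | rfl
  · left; rw [blk_pe]
  · right; rw [blk_pe]

lemma barPerm_apply (g : Perm (Fin k)) (s : Fin k) (r : Fin 2) :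
    barPerm g (pairEquiv k (s, r)) = pairEquiv k (g s, r) := by
  simp [barPerm, Equiv.permCongr_apply, pe_symm_apply]

lemma blk_barPerm (g : Perm (Fin k)) (x : Fin (2 * k)) : blk (barPerm g x) = g (blk x) := by
  obtain ⟨s, r, rfl⟩ := ex_pe x
  rw [barPerm_apply, blk_pe, blk_pe]

lemma barPerm_mul (g g' : Perm (Fin k)) : barPerm (g * g') = barPerm g * barPerm g' := by
  ext x
  obtain ⟨s, r, rfl⟩ := ex_pe x
  simp [barPerm_apply, Equiv.Perm.mul_apply]

lemma barPerm_inv (g : Perm (Fin k)) : barPerm g⁻¹ = (barPerm g)⁻¹ := by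
  rw [eq_inv_iff_mul_eq_one, ← barPerm_mul]
  ext x; obtain ⟨s, r, rfl⟩ := ex_pe x
  simp [barPerm_apply]

lemma uu_barPerm (g : Perm (Fin k)) (x : Fin (2 * k)) :
    uu k (barPerm g x) = barPerm g (uu k x) := by
  obtain ⟨s, r, rfl⟩ := ex_pe x
  rw [barPerm_apply, uu_apply, uu_apply, barPerm_apply]


section Dihedral
variable {k : ℕ} (σ : Perm (Fin (2 * k)))

/-- conjugated involution -/
def vv : Perm (Fin (2 * k)) := σ⁻¹ * uu k * σ

/-- the product, generating the cyclic parts -/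
def rot : Perm (Fin (2 * k)) := uu k * vv σ

lemma vv_apply (x : Fin (2 * k)) : vv σ x = σ⁻¹ (uu k (σ x)) := rfl

lemma vv_vv (x : Fin (2 * k)) : vv σ (vv σ x) = x := by
  simp [vv_apply, uu_uu]

lemma vv_ne (x : Fin (2 * k)) : vv σ x ≠ x := by
  simp only [vv_apply]
  intro h
  exact uu_ne (σ x) (by simpa using congrArg σ h)

lemma uu_sq : (uu k) * (uu k) = 1 := Equiv.ext fun x => uu_uu x

lemma vv_sq : (vv σ) * (vv σ) = 1 := Equiv.ext fun x => vv_vv σ x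

lemma uu_rot_uu : uu k * rot σ * (uu k)⁻¹ = (rot σ)⁻¹ := by
  have h1 : (uu k)⁻¹ = uu k := by
    rw [inv_eq_iff_mul_eq_one, uu_sq]
  have h2 : (vv σ)⁻¹ = vv σ := by
    rw [inv_eq_iff_mul_eq_one, vv_sq]
  rw [rot, h1, mul_inv_rev, h1, h2]
  rw [← mul_assoc (uu k) (uu k) (vv σ), uu_sq, one_mul]

lemma vv_rot_vv : vv σ * rot σ * (vv σ)⁻¹ = (rot σ)⁻¹ := by
  have h2 : (vv σ)⁻¹ = vv σ := by
    rw [inv_eq_iff_mul_eq_one, vv_sq]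
  rw [rot, mul_inv_rev, h2]
  have h1 : (uu k)⁻¹ = uu k := by
    rw [inv_eq_iff_mul_eq_one, uu_sq]
  rw [h1]
  calc vv σ * (uu k * vv σ) * vv σ = vv σ * uu k * (vv σ * vv σ) := by group
  _ = vv σ * uu k := by rw [vv_sq]; group

lemma uu_zpow_rot (m : ℤ) (x : Fin (2 * k)) :
    uu k ((rot σ ^ m) x) = (rot σ ^ (-m)) (uu k x) := by
  have h1 : (uu k)⁻¹ = uu k := by rw [inv_eq_iff_mul_eq_one, uu_sq]
  have : uu k * (rot σ) ^ m * (uu k)⁻¹ = (rot σ) ^ (-m) := by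
    rw [← conj_zpow, uu_rot_uu, ← zpow_neg_one, ← zpow_mul]
    ring_nf
  have := congrArg (fun (p : Perm (Fin (2*k))) => p (uu k x)) this
  simpa [h1, Equiv.Perm.mul_apply, uu_uu] using this

lemma vv_zpow_rot (m : ℤ) (x : Fin (2 * k)) :
    vv σ ((rot σ ^ m) x) = (rot σ ^ (-m)) (vv σ x) := by
  have h2 : (vv σ)⁻¹ = vv σ := by rw [inv_eq_iff_mul_eq_one, vv_sq]
  have : vv σ * (rot σ) ^ m * (vv σ)⁻¹ = (rot σ) ^ (-m) := by
    rw [← conj_zpow, vv_rot_vv, ← zpow_neg_one, ← zpow_mul]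
    ring_nf
  have := congrArg (fun (p : Perm (Fin (2*k))) => p (vv σ x)) this
  simpa [h2, Equiv.Perm.mul_apply, vv_vv] using this

lemma vv_eq_uu_rot (x : Fin (2 * k)) : vv σ x = (rot σ ^ (-1 : ℤ)) (uu k x) := by
  have : vv σ x = uu k (rot σ x) := by
    simp [rot, Equiv.Perm.mul_apply, uu_uu]
  rw [this]
  have := uu_zpow_rot σ 1 x
  simpa using this

/-- base point orbit disjointness : u a is never in the ⟨rot⟩-orbit of a -/
lemma disj (a : Fin (2 * k)) (d : ℤ) : (rot σ ^ d) a ≠ uu k a := by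
  intro hd
  -- uu maps rot^i a to rot^(d-i) a
  have key_u : ∀ i : ℤ, uu k ((rot σ ^ i) a) = (rot σ ^ (d - i)) a := by
    intro i
    rw [uu_zpow_rot]
    have : uu k a = (rot σ ^ d) a := hd.symm
    rw [this, ← Equiv.Perm.mul_apply, ← zpow_add]
    ring_nf
  have key_v : ∀ i : ℤ, vv σ ((rot σ ^ i) a) = (rot σ ^ (d - 1 - i)) a := by
    intro i
    rw [vv_zpow_rot, vv_eq_uu_rot, ← hd, ← Equiv.Perm.mul_apply, ← zpow_add,
      ← Equiv.Perm.mul_apply, ← zpow_add]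
    ring_nf
  rcases Int.even_or_odd d with ⟨m, hm⟩ | ⟨m, hm⟩
  · exact uu_ne ((rot σ ^ m) a) (by rw [key_u m, show d - m = m by omega])
  · exact vv_ne σ ((rot σ ^ m) a) (by rw [key_v m, show d - 1 - m = m by omega])

end Dihedral

section Refl
variable {k : ℕ} (σ : Perm (Fin (2 * k))) (a : Fin (2 * k))

lemma zpp (m1 m2 : ℤ) (x : Fin (2 * k)) :
    (rot σ ^ m1) ((rot σ ^ m2) x) = (rot σ ^ (m1 + m2)) x := by
  rw [← Equiv.Perm.mul_apply, ← zpow_add]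

lemma zpc {m1 m2 : ℤ} (h : m1 = m2) (x : Fin (2 * k)) : (rot σ ^ m1) x = (rot σ ^ m2) x := by
  rw [h]

lemma per_transfer {m : ℤ} (h : (rot σ ^ m) a = a) : (rot σ ^ m) (uu k a) = uu k a := by
  have h' : (rot σ ^ (-m)) a = a := by
    have := congrArg (rot σ ^ (-m) : Perm (Fin (2*k))) h
    rw [zpp, zpc σ (show -m + m = 0 by omega)] at this
    simpa using this.symm
  have h2 := uu_zpow_rot σ (-m) a
  rw [h', neg_neg] at h2
  exact h2.symm

lemma per_diff {i j : ℤ} (x : Fin (2 * k)) (h : (rot σ ^ j) x = (rot σ ^ i) x) :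
    (rot σ ^ (j - i)) x = x := by
  have := congrArg (rot σ ^ (-i) : Perm (Fin (2*k))) h
  rw [zpp, zpp, zpc σ (show -i + j = j - i by omega), zpc σ (show -i + i = 0 by omega)] at this
  simpa using this

open scoped Classical in
/-- the function underlying the reflection -/
noncomputable def hfun (x : Fin (2 * k)) : Fin (2 * k) :=
  if hA : ∃ i : ℤ, (rot σ ^ i) a = x then (rot σ ^ hA.choose) (uu k a)
  else if hB : ∃ i : ℤ, (rot σ ^ i) (uu k a) = x then (rot σ ^ hB.choose) a
  else x

lemma hfun_A (i : ℤ) : hfun σ a ((rot σ ^ i) a) = (rot σ ^ i) (uu k a) := by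
  have hA : ∃ j : ℤ, (rot σ ^ j) a = (rot σ ^ i) a := ⟨i, rfl⟩
  rw [hfun, dif_pos hA]
  have hper : (rot σ ^ (hA.choose - i)) a = a := per_diff σ a hA.choose_spec
  have h2 := congrArg (rot σ ^ i : Perm (Fin (2*k))) (per_transfer σ a hper)
  rw [zpp, zpc σ (show i + (hA.choose - i) = hA.choose by omega)] at h2
  exact h2

lemma notB (i j : ℤ) : (rot σ ^ j) a ≠ (rot σ ^ i) (uu k a) := by
  intro hj
  have := congrArg (rot σ ^ (-i) : Perm (Fin (2*k))) hj
  rw [zpp, zpp, zpc σ (show -i + i = 0 by omega)] at this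
  simp only [zpow_zero, Equiv.Perm.one_apply] at this
  exact disj σ a (-i + j) this

lemma hfun_B (i : ℤ) : hfun σ a ((rot σ ^ i) (uu k a)) = (rot σ ^ i) a := by
  have hA : ¬∃ j : ℤ, (rot σ ^ j) a = (rot σ ^ i) (uu k a) := by
    rintro ⟨j, hj⟩; exact notB σ a i j hj
  have hB : ∃ j : ℤ, (rot σ ^ j) (uu k a) = (rot σ ^ i) (uu k a) := ⟨i, rfl⟩
  rw [hfun, dif_neg hA, dif_pos hB]
  have hper : (rot σ ^ (hB.choose - i)) (uu k a) = uu k a := per_diff σ _ hB.choose_spec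
  have hper' : (rot σ ^ (hB.choose - i)) a = a := by
    have h2 := per_transfer σ (uu k a) hper
    simpa [uu_uu] using h2
  have h2 := congrArg (rot σ ^ i : Perm (Fin (2*k))) hper'
  rw [zpp, zpc σ (show i + (hB.choose - i) = hB.choose by omega)] at h2
  exact h2

lemma hfun_out (x : Fin (2 * k)) (hA : ¬∃ i : ℤ, (rot σ ^ i) a = x)
    (hB : ¬∃ i : ℤ, (rot σ ^ i) (uu k a) = x) : hfun σ a x = x := by
  rw [hfun, dif_neg hA, dif_neg hB]

lemma hfun_invol : Function.Involutive (hfun σ a) := by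
  intro x
  by_cases hA : ∃ i : ℤ, (rot σ ^ i) a = x
  · obtain ⟨i, rfl⟩ := hA
    rw [hfun_A, hfun_B]
  · by_cases hB : ∃ i : ℤ, (rot σ ^ i) (uu k a) = x
    · obtain ⟨i, rfl⟩ := hB
      rw [hfun_B, hfun_A]
    · rw [hfun_out σ a x hA hB, hfun_out σ a x hA hB]

/-- the reflection, as a permutation -/
noncomputable def hh : Perm (Fin (2 * k)) := (hfun_invol σ a).toPerm

lemma hh_apply (x : Fin (2 * k)) : hh σ a x = hfun σ a x := rfl

lemma vv_a : vv σ a = (rot σ ^ (-1 : ℤ)) (uu k a) := vv_eq_uu_rot σ a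

lemma vv_uu_a : vv σ (uu k a) = (rot σ ^ (-1 : ℤ)) a := by
  have h0 : rot σ ((vv σ) (uu k a)) = a := by
    simp [rot, Equiv.Perm.mul_apply, vv_vv, uu_uu]
  have h1 := congrArg ((rot σ)⁻¹ : Perm (Fin (2*k))) h0
  rw [perm_inv_apply_self] at h1
  rw [zpow_neg_one]
  exact h1

lemma vA (i : ℤ) : vv σ ((rot σ ^ i) a) = (rot σ ^ (-i - 1)) (uu k a) := by
  rw [vv_zpow_rot, vv_a, zpp, zpc σ (show -i + -1 = -i - 1 by omega)]

lemma vB (i : ℤ) : vv σ ((rot σ ^ i) (uu k a)) = (rot σ ^ (-i - 1)) a := by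
  rw [vv_zpow_rot, vv_uu_a, zpp, zpc σ (show -i + -1 = -i - 1 by omega)]

lemma uA (i : ℤ) : uu k ((rot σ ^ i) a) = (rot σ ^ (-i)) (uu k a) := uu_zpow_rot σ i a

lemma uB (i : ℤ) : uu k ((rot σ ^ i) (uu k a)) = (rot σ ^ (-i)) a := by
  rw [uu_zpow_rot, uu_uu]

lemma hh_uu (x : Fin (2 * k)) : hh σ a (uu k x) = uu k (hh σ a x) := by
  by_cases hA : ∃ i : ℤ, (rot σ ^ i) a = x
  · obtain ⟨i, rfl⟩ := hA
    rw [hh_apply, hh_apply, uA, hfun_B, hfun_A, uB]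
  · by_cases hB : ∃ i : ℤ, (rot σ ^ i) (uu k a) = x
    · obtain ⟨i, rfl⟩ := hB
      rw [hh_apply, hh_apply, uB, hfun_A, hfun_B, uA]
    · have hA' : ¬∃ i : ℤ, (rot σ ^ i) a = uu k x := by
        rintro ⟨i, hi⟩
        exact hB ⟨-i, by rw [← uA σ a i, hi, uu_uu]⟩
      have hB' : ¬∃ i : ℤ, (rot σ ^ i) (uu k a) = uu k x := by
        rintro ⟨i, hi⟩
        exact hA ⟨-i, by rw [← uB σ a i, hi, uu_uu]⟩
      rw [hh_apply, hh_apply, hfun_out σ a _ hA' hB', hfun_out σ a x hA hB]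

lemma hh_vv (x : Fin (2 * k)) : hh σ a (vv σ x) = vv σ (hh σ a x) := by
  by_cases hA : ∃ i : ℤ, (rot σ ^ i) a = x
  · obtain ⟨i, rfl⟩ := hA
    rw [hh_apply, hh_apply, vA, hfun_B, hfun_A, vB]
  · by_cases hB : ∃ i : ℤ, (rot σ ^ i) (uu k a) = x
    · obtain ⟨i, rfl⟩ := hB
      rw [hh_apply, hh_apply, vB, hfun_A, hfun_B, vA]
    · have hA' : ¬∃ i : ℤ, (rot σ ^ i) a = vv σ x := by
        rintro ⟨i, hi⟩
        exact hB ⟨-i - 1, by rw [← vA σ a i, hi, vv_vv]⟩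
      have hB' : ¬∃ i : ℤ, (rot σ ^ i) (uu k a) = vv σ x := by
        rintro ⟨i, hi⟩
        exact hA ⟨-i - 1, by rw [← vB σ a i, hi, vv_vv]⟩
      rw [hh_apply, hh_apply, hfun_out σ a _ hA' hB', hfun_out σ a x hA hB]

end Refl

section Blocks
variable {k : ℕ}

lemma inv_comm_uu {w : Perm (Fin (2 * k))} (hw : ∀ x, w (uu k x) = uu k (w x)) :
    ∀ x, w⁻¹ (uu k x) = uu k (w⁻¹ x) := by
  intro x
  have := hw (w⁻¹ x)
  rw [perm_apply_inv_self] at this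
  have := congrArg (w⁻¹ : Perm (Fin (2*k))) this
  rw [perm_inv_apply_self] at this
  exact this.symm

lemma blk_dep {w : Perm (Fin (2 * k))} (hw : ∀ x, w (uu k x) = uu k (w x))
    {x y : Fin (2 * k)} (h : blk x = blk y) : blk (w x) = blk (w y) := by
  have key : ∀ z : Fin (2 * k), blk (w z) = blk (w (pairEquiv k (blk z, 0))) := by
    intro z
    rcases blk_cases z with hz | hz
    · conv_lhs => rw [hz]
    · conv_lhs => rw [hz, ← uu_e0, hw, blk_uu]
  rw [key x, key y, h]

/-- the block permutation induced by a `uu`-commuting permutation -/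
def gof (w : Perm (Fin (2 * k))) (hw : ∀ x, w (uu k x) = uu k (w x)) : Perm (Fin k) where
  toFun s := blk (w (pairEquiv k (s, 0)))
  invFun s := blk (w⁻¹ (pairEquiv k (s, 0)))
  left_inv := by
    intro s
    have h1 : blk (w⁻¹ (pairEquiv k (blk (w (pairEquiv k (s, 0))), 0)))
        = blk (w⁻¹ (w (pairEquiv k (s, 0)))) :=
      blk_dep (inv_comm_uu hw) (by rw [blk_pe])
    simp only [h1, perm_inv_apply_self, blk_pe]
  right_inv := by
    intro s
    have h1 : blk (w (pairEquiv k (blk (w⁻¹ (pairEquiv k (s, 0))), 0)))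
        = blk (w (w⁻¹ (pairEquiv k (s, 0)))) :=
      blk_dep hw (by rw [blk_pe])
    simp only [h1, perm_apply_inv_self, blk_pe]

lemma gof_blk {w : Perm (Fin (2 * k))} (hw : ∀ x, w (uu k x) = uu k (w x)) (x : Fin (2 * k)) :
    blk (w x) = gof w hw (blk x) := by
  have : gof w hw (blk x) = blk (w (pairEquiv k (blk x, 0))) := rfl
  rw [this]
  exact blk_dep hw (by rw [blk_pe])

/-- the block-preserving part of a `uu`-commuting permutation -/
def tauof (w : Perm (Fin (2 * k))) (hw : ∀ x, w (uu k x) = uu k (w x)) : Perm (Fin (2 * k)) :=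
  w * (barPerm (gof w hw))⁻¹

lemma tauof_blk {w : Perm (Fin (2 * k))} (hw : ∀ x, w (uu k x) = uu k (w x)) (x : Fin (2 * k)) :
    blk (tauof w hw x) = blk x := by
  have h1 : tauof w hw x = w (barPerm (gof w hw)⁻¹ x) := by
    rw [tauof, barPerm_inv]; rfl
  rw [h1, gof_blk hw, blk_barPerm]
  simp

lemma tauof_decomp (w : Perm (Fin (2 * k))) (hw : ∀ x, w (uu k x) = uu k (w x)) :
    w = tauof w hw * barPerm (gof w hw) := by
  rw [tauof]; group

lemma blk_swap (t : Fin k) (y : Fin (2 * k)) :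
    blk (Equiv.swap (pairEquiv k (t, 0)) (pairEquiv k (t, 1)) y) = blk y := by
  rcases eq_or_ne y (pairEquiv k (t, 0)) with rfl | h0
  · rw [Equiv.swap_apply_left, blk_pe, blk_pe]
  rcases eq_or_ne y (pairEquiv k (t, 1)) with rfl | h1
  · rw [Equiv.swap_apply_right, blk_pe, blk_pe]
  · rw [Equiv.swap_apply_of_ne_of_ne h0 h1]

lemma mem_Ksub_of_blk (π : Perm (Fin (2 * k))) (hπ : ∀ x, blk (π x) = blk x) : π ∈ Ksub k := by
  suffices H : ∀ S : Finset (Fin k), ∀ π : Perm (Fin (2 * k)), (∀ x, blk (π x) = blk x) →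
      (∀ s ∉ S, π (pairEquiv k (s, 0)) = pairEquiv k (s, 0)) → π ∈ Ksub k by
    exact H Finset.univ π hπ (fun s hs => absurd (Finset.mem_univ s) hs)
  intro S
  induction S using Finset.induction_on with
  | empty =>
    intro π hb hfix
    have h1 : π = 1 := by
      ext x
      obtain ⟨s, r, rfl⟩ := ex_pe x
      have h0 : π (pairEquiv k (s, 0)) = pairEquiv k (s, 0) :=
        hfix s (Finset.notMem_empty s)
      rcases fin2cases r with rfl | rfl
      · rw [h0]; rfl
      · have hblk := hb (pairEquiv k (s, 1))
        rw [blk_pe] at hblk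
        rcases blk_cases (π (pairEquiv k (s, 1))) with h | h
        · rw [hblk] at h
          have := π.injective (h.trans h0.symm)
          have := (pairEquiv k).injective this
          simp [Prod.ext_iff] at this
        · rw [hblk] at h
          rw [h]; rfl
    rw [h1]; exact Subgroup.one_mem _
  | @insert t S hts IH =>
    intro π hb hfix
    by_cases h0 : π (pairEquiv k (t, 0)) = pairEquiv k (t, 0)
    · refine IH π hb (fun s hs => ?_)
      rcases eq_or_ne s t with rfl | hst
      · exact h0
      · exact hfix s (by simp [hst, hs])
    · -- π swaps block t
      have hblk := hb (pairEquiv k (t, 0))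
      rw [blk_pe] at hblk
      have h1 : π (pairEquiv k (t, 0)) = pairEquiv k (t, 1) := by
        rcases blk_cases (π (pairEquiv k (t, 0))) with h | h
        · rw [hblk] at h; exact absurd h h0
        · rw [hblk] at h; exact h
      set w := Equiv.swap (pairEquiv k (t, 0)) (pairEquiv k (t, 1)) with hw
      have hπ' : ∀ x, blk ((w * π) x) = blk x := by
        intro x
        rw [Equiv.Perm.mul_apply, blk_swap, hb]
      have hfix' : ∀ s ∉ S, (w * π) (pairEquiv k (s, 0)) = pairEquiv k (s, 0) := by
        intro s hs
        rcases eq_or_ne s t with rfl | hst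
        · rw [Equiv.Perm.mul_apply, h1, hw, Equiv.swap_apply_right]
        · have hfs := hfix s (by simp [hst, hs])
          rw [Equiv.Perm.mul_apply, hfs, hw, Equiv.swap_apply_of_ne_of_ne]
          · intro hc
            exact hst (by simpa [Prod.ext_iff] using (pairEquiv k).injective hc)
          · intro hc
            have := (pairEquiv k).injective hc
            simp [Prod.ext_iff] at this
      have hmem : (w * π) ∈ Ksub k := IH (w * π) hπ' hfix'
      have hwmem : w ∈ Ksub k := Subgroup.subset_closure ⟨t, rfl⟩
      have : π = w * (w * π) := by
        rw [← mul_assoc, hw, Equiv.swap_mul_self, one_mul]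
      rw [this]
      exact Subgroup.mul_mem _ hwmem hmem

end Blocks

section Signs

set_option linter.unusedSectionVars false
variable (n : ℕ) [NeZero n]

/-- negation on ZMod n -/
def negP : Perm (ZMod n) := Function.Involutive.toPerm (fun x => -x) (fun x => by ring_nf)

/-- x ↦ -1 - x on ZMod n -/
def refP : Perm (ZMod n) := Function.Involutive.toPerm (fun x => -1 - x) (fun x => by ring_nf)

lemma negP_apply (x : ZMod n) : negP n x = -x := rfl
lemma refP_apply (x : ZMod n) : refP n x = -1 - x := rfl

lemma negP_mul_refP : negP n * refP n = Equiv.addRight (1 : ZMod n) := by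
  ext x
  show -(-1 - x) = x + 1
  ring

/-- translation -/
def trP : Perm (ZMod n) := Equiv.addRight (1 : ZMod n)

lemma trP_pow (m : ℕ) (x : ZMod n) : (trP n ^ m) x = x + m := by
  induction m with
  | zero => simp
  | succ m ih =>
    rw [pow_succ', Equiv.Perm.mul_apply, ih]
    show x + (m : ZMod n) + 1 = x + ((m + 1 : ℕ) : ZMod n)
    push_cast
    ring

/-- The auxiliary 2n-cycle on `ZMod n ⊕ ZMod n`. -/
def TT : Perm (ZMod n ⊕ ZMod n) :=
  Equiv.sumComm (ZMod n) (ZMod n) * Equiv.sumCongr (1 : Perm (ZMod n)) (trP n)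

lemma TT_inl (x : ZMod n) : TT n (Sum.inl x) = Sum.inr x := rfl
lemma TT_inr (x : ZMod n) : TT n (Sum.inr x) = Sum.inl (x + 1) := rfl

lemma TT_sq : TT n ^ 2 = Equiv.sumCongr (trP n) (trP n) := by
  ext x
  rcases x with x | x
  · show TT n (TT n (Sum.inl x)) = _
    rw [TT_inl, TT_inr]; rfl
  · show TT n (TT n (Sum.inr x)) = _
    rw [TT_inr, TT_inl]; rfl

lemma TT_pow_even (m : ℕ) (x : ZMod n) : (TT n ^ (2 * m)) (Sum.inl x) = Sum.inl (x + m) := by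
  rw [pow_mul, TT_sq]
  have : (Equiv.sumCongr (trP n) (trP n)) ^ m
      = Equiv.sumCongr (trP n ^ m) (trP n ^ m) := by
    have := map_pow (Equiv.Perm.sumCongrHom (ZMod n) (ZMod n)) (trP n, trP n) m
    simpa [Equiv.Perm.sumCongrHom, Prod.pow_def] using this.symm
  rw [this]
  simp [trP_pow]

lemma TT_pow_odd (m : ℕ) (x : ZMod n) :
    (TT n ^ (2 * m + 1)) (Sum.inl x) = Sum.inr (x + m) := by
  rw [pow_succ', Equiv.Perm.mul_apply, TT_pow_even, TT_inl]

lemma TT_isCycle : (TT n).IsCycle := by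
  refine ⟨Sum.inl 0, by rw [TT_inl]; simp, fun y _ => ?_⟩
  rcases y with z | z
  · refine ⟨((2 * z.val : ℕ) : ℤ), ?_⟩
    rw [zpow_natCast, TT_pow_even]
    simp [ZMod.natCast_val, ZMod.cast_id]
  · refine ⟨((2 * z.val + 1 : ℕ) : ℤ), ?_⟩
    rw [zpow_natCast, TT_pow_odd]
    simp [ZMod.natCast_val, ZMod.cast_id]

lemma TT_support : (TT n).support = Finset.univ := by
  ext y
  simp only [Equiv.Perm.mem_support, Finset.mem_univ, iff_true]
  rcases y with z | z
  · rw [TT_inl]; simp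
  · rw [TT_inr]; simp

lemma TT_sign : Equiv.Perm.sign (TT n) = -1 := by
  rw [(TT_isCycle n).sign, TT_support]
  have : (Finset.univ : Finset (ZMod n ⊕ ZMod n)).card = n + n := by
    rw [Finset.card_univ, Fintype.card_sum, ZMod.card]
  rw [this, Even.neg_one_pow ⟨n, rfl⟩]

lemma sign_sumComm_mul :
    Equiv.Perm.sign (Equiv.sumComm (ZMod n) (ZMod n) : Perm (ZMod n ⊕ ZMod n))
      * Equiv.Perm.sign (trP n) = -1 := by
  have h := TT_sign n
  rw [TT, map_mul, Equiv.Perm.sign_sumCongr] at h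
  simpa using h

lemma sign_product :
    Equiv.Perm.sign (Equiv.sumComm (ZMod n) (ZMod n) : Perm (ZMod n ⊕ ZMod n))
      * (Equiv.Perm.sign (negP n) * Equiv.Perm.sign (refP n)) = -1 := by
  have h2 : Equiv.Perm.sign (negP n) * Equiv.Perm.sign (refP n)
      = Equiv.Perm.sign (trP n) := by
    rw [← map_mul, negP_mul_refP]; rfl
  rw [h2]
  exact sign_sumComm_mul n

end Signs

section BarSign
variable {k : ℕ}

/-- `Fin k × Fin 2 ≃ Fin k ⊕ Fin k` -/
def EE : Fin k × Fin 2 ≃ Fin k ⊕ Fin k where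
  toFun p := if p.2 = 0 then Sum.inl p.1 else Sum.inr p.1
  invFun := Sum.elim (fun s => (s, 0)) (fun s => (s, 1))
  left_inv := by
    rintro ⟨s, r⟩
    rcases fin2cases r with rfl | rfl <;> simp
  right_inv := by
    rintro (s | s) <;> simp

lemma sign_barPerm (g : Perm (Fin k)) : Equiv.Perm.sign (barPerm g) = 1 := by
  rw [barPerm, Equiv.Perm.sign_permCongr]
  have : (EE : Fin k × Fin 2 ≃ Fin k ⊕ Fin k).permCongr
      (Equiv.prodCongr g (Equiv.refl (Fin 2))) = Equiv.sumCongr g g := by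
    ext x
    rcases x with s | s <;> simp [EE, Equiv.permCongr_apply]
  have h2 := Equiv.Perm.sign_permCongr (EE : Fin k × Fin 2 ≃ Fin k ⊕ Fin k)
      (Equiv.prodCongr g (Equiv.refl (Fin 2)))
  rw [this, Equiv.Perm.sign_sumCongr] at h2
  rw [← h2, Int.units_mul_self]

end BarSign

section Orbit
variable {k : ℕ} (σ : Perm (Fin (2 * k))) (a : Fin (2 * k))

/-- length of the `rot`-orbit of the base point -/
noncomputable def nn : ℕ := Function.minimalPeriod (fun x => rot σ • x) a

lemma nn_pos : 0 < nn σ a := by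
  apply Function.minimalPeriod_pos_of_mem_periodicPts
  refine ⟨orderOf (rot σ), orderOf_pos _, ?_⟩
  show ((fun x => rot σ • x)^[orderOf (rot σ)]) a = a
  rw [smul_iterate, pow_orderOf_eq_one]
  simp

lemma zdvd (m : ℤ) : (rot σ ^ m) a = a ↔ ((nn σ a : ℤ)) ∣ m := by
  rw [nn, ← MulAction.zpow_smul_eq_iff_minimalPeriod_dvd]
  rfl

lemma rot_congr_a {m1 m2 : ℤ} (h : ((nn σ a : ℤ)) ∣ (m1 - m2)) :
    (rot σ ^ m1) a = (rot σ ^ m2) a := by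
  have h1 : (rot σ ^ (m1 - m2)) a = a := (zdvd σ a _).2 h
  have := congrArg (rot σ ^ m2 : Perm (Fin (2*k))) h1
  rw [zpp, zpc σ (show m2 + (m1 - m2) = m1 by omega)] at this
  exact this

lemma rot_congr_ua {m1 m2 : ℤ} (h : ((nn σ a : ℤ)) ∣ (m1 - m2)) :
    (rot σ ^ m1) (uu k a) = (rot σ ^ m2) (uu k a) := by
  have h1 : (rot σ ^ (m1 - m2)) a = a := (zdvd σ a _).2 h
  have h2 := per_transfer σ a h1
  have := congrArg (rot σ ^ m2 : Perm (Fin (2*k))) h2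
  rw [zpp, zpc σ (show m2 + (m1 - m2) = m1 by omega)] at this
  exact this

lemma zmod_eq_of {i j : ZMod (nn σ a)} (h : ((nn σ a : ℤ)) ∣ ((i.val : ℤ) - (j.val : ℤ))) :
    i = j := by
  haveI : NeZero (nn σ a) := ⟨(nn_pos σ a).ne'⟩
  have h1 : (((i.val : ℤ) - (j.val : ℤ) : ℤ) : ZMod (nn σ a)) = 0 :=
    (ZMod.intCast_zmod_eq_zero_iff_dvd _ _).2 h
  push_cast at h1
  rw [ZMod.natCast_val, ZMod.natCast_val, ZMod.cast_id, ZMod.cast_id, sub_eq_zero] at h1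
  exact h1

lemma val_congr (m : ℤ) :
    haveI : NeZero (nn σ a) := ⟨(nn_pos σ a).ne'⟩
    ((nn σ a : ℤ)) ∣ ((((m : ZMod (nn σ a)).val : ℤ)) - m) := by
  haveI : NeZero (nn σ a) := ⟨(nn_pos σ a).ne'⟩
  rw [← ZMod.intCast_zmod_eq_zero_iff_dvd]
  push_cast
  rw [ZMod.natCast_val, ZMod.cast_id, sub_eq_zero]

lemma val_sub_congr {K : ℕ} [NeZero K] (i j : ZMod K) :
    ((K : ℤ)) ∣ (((i - j : ZMod K).val : ℤ) - ((i.val : ℤ) - (j.val : ℤ))) := by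
  rw [← ZMod.intCast_zmod_eq_zero_iff_dvd]
  push_cast
  rw [ZMod.natCast_val, ZMod.natCast_val, ZMod.natCast_val, ZMod.cast_id, ZMod.cast_id,
    ZMod.cast_id]
  ring

end Orbit

section Helpers2
variable {k : ℕ}

lemma blk_eq_cases {x y : Fin (2 * k)} (h : blk x = blk y) : y = x ∨ y = uu k x := by
  rcases blk_cases x with hx | hx <;> rcases blk_cases y with hy | hy <;>
    rw [← h] at hy
  · left; rw [hx, hy]
  · right; rw [hy, hx, uu_e0, blk_pe]
  · right; rw [hy, hx, uu_e1, blk_pe]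
  · left; rw [hx, hy]

lemma cast_dvd {K : ℕ} [NeZero K] (i : ZMod K) (m : ℤ) (h : (m : ZMod K) = i) :
    ((K : ℤ)) ∣ ((i.val : ℤ) - m) := by
  rw [← ZMod.intCast_zmod_eq_zero_iff_dvd]
  push_cast
  rw [ZMod.natCast_val, ZMod.cast_id, h, sub_eq_zero]

lemma cast_neg_val {K : ℕ} [NeZero K] (i : ZMod K) :
    ((K : ℤ)) ∣ (((-i).val : ℤ) - (-(i.val : ℤ))) := by
  refine cast_dvd (-i) _ ?_
  push_cast
  rw [ZMod.natCast_val, ZMod.cast_id]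

lemma cast_ref_val {K : ℕ} [NeZero K] (i : ZMod K) :
    ((K : ℤ)) ∣ (((-1 - i).val : ℤ) - (-1 - (i.val : ℤ))) := by
  refine cast_dvd (-1 - i) _ ?_
  push_cast
  rw [ZMod.natCast_val, ZMod.cast_id]

lemma cast_int_val {K : ℕ} [NeZero K] (m : ℤ) :
    ((K : ℤ)) ∣ ((((m : ZMod K)).val : ℤ) - m) := by
  refine cast_dvd _ _ ?_
  rfl

end Helpers2

section Models
variable {k : ℕ} (σ : Perm (Fin (2 * k))) (a : Fin (2 * k))

lemma gof_apply (w : Perm (Fin (2 * k))) (hw : ∀ x, w (uu k x) = uu k (w x)) (s : Fin k) :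
    gof w hw s = blk (w (pairEquiv k (s, 0))) := rfl

/-- the embedding realizing the two half-orbits -/
noncomputable def embHf : ZMod (nn σ a) ⊕ ZMod (nn σ a) → Fin (2 * k) :=
  Sum.elim (fun i => (rot σ ^ (i.val : ℤ)) a) (fun i => (rot σ ^ (i.val : ℤ)) (uu k a))

lemma embHf_inj : Function.Injective (embHf σ a) := by
  rintro (i | i) (j | j) h
  · have h1 := per_diff σ a (h : (rot σ ^ (i.val : ℤ)) a = (rot σ ^ (j.val : ℤ)) a)
    have h2 := zmod_eq_of σ a ((zdvd σ a _).1 h1)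
    rw [h2]
  · exact absurd h (notB σ a _ _)
  · exact absurd h.symm (notB σ a _ _)
  · have h1 := per_diff σ (uu k a) (h :
      (rot σ ^ (i.val : ℤ)) (uu k a) = (rot σ ^ (j.val : ℤ)) (uu k a))
    have h1' : (rot σ ^ ((i.val : ℤ) - (j.val : ℤ))) a = a := by
      have := per_transfer σ (uu k a) h1
      simpa [uu_uu] using this
    have h2 := zmod_eq_of σ a ((zdvd σ a _).1 h1')
    rw [h2]

noncomputable def embH : (ZMod (nn σ a) ⊕ ZMod (nn σ a)) ↪ Fin (2 * k) :=
  ⟨embHf σ a, embHf_inj σ a⟩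

lemma uAr (i : ℤ) : (rot σ ^ i) (uu k a) = uu k ((rot σ ^ (-i)) a) := by
  rw [uA σ a (-i), zpc σ (show - -i = i by ring)]

lemma inA_range (x : Fin (2 * k)) (hx : ∃ i : ℤ, (rot σ ^ i) a = x) :
    haveI : NeZero (nn σ a) := ⟨(nn_pos σ a).ne'⟩
    ∃ i : ZMod (nn σ a), (rot σ ^ (i.val : ℤ)) a = x := by
  haveI : NeZero (nn σ a) := ⟨(nn_pos σ a).ne'⟩
  obtain ⟨i, rfl⟩ := hx
  exact ⟨(i : ZMod (nn σ a)), rot_congr_a σ a (cast_int_val i)⟩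

lemma inB_range (x : Fin (2 * k)) (hx : ∃ i : ℤ, (rot σ ^ i) (uu k a) = x) :
    haveI : NeZero (nn σ a) := ⟨(nn_pos σ a).ne'⟩
    ∃ i : ZMod (nn σ a), (rot σ ^ (i.val : ℤ)) (uu k a) = x := by
  haveI : NeZero (nn σ a) := ⟨(nn_pos σ a).ne'⟩
  obtain ⟨i, rfl⟩ := hx
  exact ⟨(i : ZMod (nn σ a)), rot_congr_ua σ a (cast_int_val i)⟩

lemma hh_model [NeZero (nn σ a)] :
    hh σ a = Equiv.Perm.viaFintypeEmbedding
      (Equiv.sumComm (ZMod (nn σ a)) (ZMod (nn σ a))) (embH σ a) := by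
  refine Equiv.ext fun x => ?_
  by_cases hx : x ∈ Set.range (embH σ a)
  · obtain ⟨y, rfl⟩ := hx
    rw [Equiv.Perm.viaFintypeEmbedding_apply_image]
    rcases y with i | i
    · show hh σ a ((rot σ ^ (i.val : ℤ)) a) = embHf σ a (Sum.inr i)
      rw [hh_apply, hfun_A]; rfl
    · show hh σ a ((rot σ ^ (i.val : ℤ)) (uu k a)) = embHf σ a (Sum.inl i)
      rw [hh_apply, hfun_B]; rfl
  · rw [Equiv.Perm.viaFintypeEmbedding_apply_notMem_range _ _ hx]
    rw [hh_apply]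
    apply hfun_out
    · intro hc
      obtain ⟨i, hi⟩ := inA_range σ a x hc
      exact hx ⟨Sum.inl i, hi⟩
    · intro hc
      obtain ⟨i, hi⟩ := inB_range σ a x hc
      exact hx ⟨Sum.inr i, hi⟩

noncomputable def embGf : ZMod (nn σ a) → Fin k := fun i => blk ((rot σ ^ (i.val : ℤ)) a)

lemma embGf_inj : Function.Injective (embGf σ a) := by
  intro i j h
  rcases blk_eq_cases h with h1 | h1
  · have h2 := per_diff σ a h1
    exact (zmod_eq_of σ a ((zdvd σ a _).1 h2)).symm
  · rw [uA σ a] at h1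
    exact absurd h1 (notB σ a _ _)

noncomputable def embG : ZMod (nn σ a) ↪ Fin k := ⟨embGf σ a, embGf_inj σ a⟩

lemma g_model [NeZero (nn σ a)] :
    gof (hh σ a) (hh_uu σ a)
      = Equiv.Perm.viaFintypeEmbedding (negP (nn σ a)) (embG σ a) := by
  refine Equiv.ext fun s => ?_
  by_cases hs : s ∈ Set.range (embG σ a)
  · obtain ⟨i, rfl⟩ := hs
    rw [Equiv.Perm.viaFintypeEmbedding_apply_image]
    show gof (hh σ a) (hh_uu σ a) (embGf σ a i) = embGf σ a (negP (nn σ a) i)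
    have e0 : embGf σ a i = blk ((rot σ ^ (i.val : ℤ)) a) := rfl
    have e1 : gof (hh σ a) (hh_uu σ a) (blk ((rot σ ^ (i.val : ℤ)) a))
        = blk (hh σ a ((rot σ ^ (i.val : ℤ)) a)) := (gof_blk _ _).symm
    rw [e0, e1, hh_apply, hfun_A, uAr, blk_uu]
    show _ = blk ((rot σ ^ (((-i).val : ℤ))) a)
    rw [rot_congr_a σ a (cast_neg_val i)]
  · rw [Equiv.Perm.viaFintypeEmbedding_apply_notMem_range _ _ hs]
    have hfix : hh σ a (pairEquiv k (s, 0)) = pairEquiv k (s, 0) := by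
      rw [hh_apply]
      apply hfun_out
      · intro ⟨i, hi⟩
        refine hs ⟨(i : ZMod (nn σ a)), ?_⟩
        show blk _ = s
        rw [rot_congr_a σ a (cast_int_val i), hi, blk_pe]
      · intro ⟨i, hi⟩
        refine hs ⟨((-i : ℤ) : ZMod (nn σ a)), ?_⟩
        show blk _ = s
        rw [rot_congr_a σ a (cast_int_val (-i)), ← uB σ a i, hi, blk_uu, blk_pe]
    rw [gof_apply, hfix, blk_pe]

/-- the conjugated reflection -/
noncomputable def hone : Perm (Fin (2 * k)) := σ * hh σ a * σ⁻¹

lemma hone_sigma (y : Fin (2 * k)) : hone σ a (σ y) = σ (hh σ a y) := by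
  simp [hone, Equiv.Perm.mul_apply]

lemma uu_sigma (y : Fin (2 * k)) : uu k (σ y) = σ (vv σ y) := by
  rw [vv_apply, perm_apply_inv_self]

lemma hone_uu : ∀ x, hone σ a (uu k x) = uu k (hone σ a x) := by
  intro x
  have h1 : uu k x = σ (vv σ (σ⁻¹ x)) := by
    rw [← uu_sigma, perm_apply_inv_self]
  rw [h1, hone_sigma, hh_vv]
  show _ = uu k (σ (hh σ a (σ⁻¹ x)))
  rw [uu_sigma]

noncomputable def embG1f : ZMod (nn σ a) → Fin k := fun i => blk (σ ((rot σ ^ (i.val : ℤ)) a))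

lemma embG1f_inj : Function.Injective (embG1f σ a) := by
  intro i j h
  rcases blk_eq_cases h with h1 | h1
  · have h2 := per_diff σ a (σ.injective h1)
    exact (zmod_eq_of σ a ((zdvd σ a _).1 h2)).symm
  · rw [uu_sigma, vA] at h1
    exact absurd (σ.injective h1) (notB σ a _ _)

noncomputable def embG1 : ZMod (nn σ a) ↪ Fin k := ⟨embG1f σ a, embG1f_inj σ a⟩

lemma g1_model [NeZero (nn σ a)] :
    gof (hone σ a) (hone_uu σ a)
      = Equiv.Perm.viaFintypeEmbedding (refP (nn σ a)) (embG1 σ a) := by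
  refine Equiv.ext fun s => ?_
  by_cases hs : s ∈ Set.range (embG1 σ a)
  · obtain ⟨i, rfl⟩ := hs
    rw [Equiv.Perm.viaFintypeEmbedding_apply_image]
    show gof (hone σ a) (hone_uu σ a) (embG1f σ a i) = embG1f σ a (refP (nn σ a) i)
    have e1 : gof (hone σ a) (hone_uu σ a) (blk (σ ((rot σ ^ (i.val : ℤ)) a)))
        = blk (hone σ a (σ ((rot σ ^ (i.val : ℤ)) a))) := (gof_blk _ _).symm
    have e2 : embG1f σ a (refP (nn σ a) i) = blk (σ ((rot σ ^ (((-1 - i).val : ℤ))) a)) := rfl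
    rw [show embG1f σ a i = blk (σ ((rot σ ^ (i.val : ℤ)) a)) from rfl, e1, hone_sigma,
      hh_apply, hfun_A, e2, rot_congr_a σ a (cast_ref_val i)]
    have e3 : uu k (σ ((rot σ ^ (-1 - (i.val : ℤ))) a)) = σ ((rot σ ^ (i.val : ℤ)) (uu k a)) := by
      rw [uu_sigma, vA, zpc σ (show -(-1 - (i.val : ℤ)) - 1 = (i.val : ℤ) by ring)]
    rw [← e3, blk_uu]
  · rw [Equiv.Perm.viaFintypeEmbedding_apply_notMem_range _ _ hs]
    have hfix : hone σ a (pairEquiv k (s, 0)) = pairEquiv k (s, 0) := by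
      have h1 : pairEquiv k (s, 0) = σ (σ⁻¹ (pairEquiv k (s, 0))) := by
        rw [perm_apply_inv_self]
      rw [h1, hone_sigma]
      refine congrArg σ ?_
      rw [hh_apply]
      apply hfun_out
      · intro ⟨i, hi⟩
        refine hs ⟨(i : ZMod (nn σ a)), ?_⟩
        show blk _ = s
        rw [rot_congr_a σ a (cast_int_val i), hi, perm_apply_inv_self, blk_pe]
      · intro ⟨i, hi⟩
        refine hs ⟨((-i - 1 : ℤ) : ZMod (nn σ a)), ?_⟩
        show blk _ = s
        have e4 : uu k (σ ((rot σ ^ ((-i - 1 : ℤ))) a)) = σ ((rot σ ^ i) (uu k a)) := by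
          rw [uu_sigma, vA, zpc σ (show -(-i - 1 : ℤ) - 1 = i by ring)]
        rw [rot_congr_a σ a (cast_int_val (-i - 1)), ← blk_uu, e4, hi,
          perm_apply_inv_self, blk_pe]
    rw [gof_apply, hfix, blk_pe]

end Models

end KL

/-- Key Lemma: for every `σ ∈ S_{2k}` there are `τ, τ₁ ∈ K` and `g, g₁ ∈ S_k` with
`σ τ ḡ σ⁻¹ = τ₁ ḡ₁` and `sgn(τ₁) sgn(g) sgn(g₁) = −1`. -/
theorem key_lemma (k : ℕ) (hk : 0 < k) (σ : Equiv.Perm (Fin (2 * k))) :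
    ∃ τ ∈ Ksub k, ∃ τ₁ ∈ Ksub k, ∃ g g₁ : Equiv.Perm (Fin k),
      σ * τ * barPerm g * σ⁻¹ = τ₁ * barPerm g₁ ∧
        (Equiv.Perm.sign τ₁ : ℤ) * (Equiv.Perm.sign g : ℤ) * (Equiv.Perm.sign g₁ : ℤ) = -1 := by
  classical
  open KL in
  set a : Fin (2 * k) := pairEquiv k (⟨0, hk⟩, 0) with ha
  haveI : NeZero (KL.nn σ a) := ⟨(KL.nn_pos σ a).ne'⟩
  set g := KL.gof (KL.hh σ a) (KL.hh_uu σ a) with hg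
  set g₁ := KL.gof (KL.hone σ a) (KL.hone_uu σ a) with hg1
  set τ := KL.tauof (KL.hh σ a) (KL.hh_uu σ a) with hτ
  set τ₁ := KL.tauof (KL.hone σ a) (KL.hone_uu σ a) with hτ1
  refine ⟨τ, KL.mem_Ksub_of_blk _ (KL.tauof_blk _), τ₁, KL.mem_Ksub_of_blk _ (KL.tauof_blk _),
    g, g₁, ?_, ?_⟩
  · calc σ * τ * barPerm g * σ⁻¹ = σ * (τ * barPerm g) * σ⁻¹ := by group
    _ = σ * KL.hh σ a * σ⁻¹ := by rw [hτ, hg, ← KL.tauof_decomp]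
    _ = KL.hone σ a := rfl
    _ = τ₁ * barPerm g₁ := KL.tauof_decomp _ _
  · have shone : Equiv.Perm.sign (KL.hone σ a) = Equiv.Perm.sign (KL.hh σ a) := by
      rw [KL.hone, map_mul, map_mul, map_inv]
      exact mul_inv_cancel_comm _ _
    have s1 : Equiv.Perm.sign τ₁ = Equiv.Perm.sign (KL.hh σ a) := by
      rw [hτ1, KL.tauof, map_mul, map_inv, KL.sign_barPerm, inv_one, mul_one, shone]
    have s2 : Equiv.Perm.sign (KL.hh σ a)
        = Equiv.Perm.sign (Equiv.sumComm (ZMod (KL.nn σ a)) (ZMod (KL.nn σ a)) :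
            Equiv.Perm (ZMod (KL.nn σ a) ⊕ ZMod (KL.nn σ a))) := by
      rw [KL.hh_model σ a, Equiv.Perm.viaFintypeEmbedding_sign]
    have s3 : Equiv.Perm.sign g = Equiv.Perm.sign (KL.negP (KL.nn σ a)) := by
      rw [hg, KL.g_model σ a, Equiv.Perm.viaFintypeEmbedding_sign]
    have s4 : Equiv.Perm.sign g₁ = Equiv.Perm.sign (KL.refP (KL.nn σ a)) := by
      rw [hg1, KL.g1_model σ a, Equiv.Perm.viaFintypeEmbedding_sign]
    have H : Equiv.Perm.sign τ₁ * Equiv.Perm.sign g * Equiv.Perm.sign g₁ = (-1 : ℤˣ) := by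
      rw [s1, s2, s3, s4, mul_assoc]
      exact KL.sign_product (KL.nn σ a)
    have := congrArg (Units.val) H
    simpa using this
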